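/- Define q : ℍ → ℝ by q(w) = (4·Im(w)/(π·|w|⁴)) · (Im(w) + Re(w)·(π/2 − arg(w))), where arg denotes the principal argument (taking values in (0, π) on ℍ), and define ĝ : ℝ → ℝ by ĝ(θ) = (4/(3π)) · (θ(π − θ) + (π/2 − θ)·sin θ·cos θ + 2·sin²θ). Then the function u : ℍ → ℝ defined by u(z) = ĝ(arg z) is twice continuously differentiable on ℍ (as a function of (Re z, Im z) ∈ ℝ²) and satisfies the Poisson equation Δu(z) = −(4/3)·q(z) for all z ∈ ℍ, where Δ = ∂²/∂x² + ∂²/∂y² is the Euclidean Laplacian. -/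

import Mathlib

open Real

/-- The Euclidean Laplacian `Δf = ∂²f/∂x² + ∂²f/∂y²` of a function `f : ℂ → ℝ` of the
real coordinates `(Re z, Im z)`. -/
noncomputable def planeLaplacian (f : ℂ → ℝ) (z : ℂ) : ℝ :=
  deriv (deriv (fun x : ℝ => f ((x : ℂ) + z.im * Complex.I))) z.re +
    deriv (deriv (fun y : ℝ => f ((z.re : ℂ) + y * Complex.I))) z.im

/-- The density `q(ℍ; 0, ∞; ·)` of Lemma 4.2:
`q(w) = (4 Im w/(π|w|⁴)) (Im w + Re w (π/2 − arg w))`. -/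
noncomputable def qDensity (w : ℂ) : ℝ :=
  4 * w.im / (π * ‖w‖ ^ 4) * (w.im + w.re * (π / 2 - Complex.arg w))

/-- The explicit solution `ĝ(θ) = (4/(3π))(θ(π−θ) + (π/2−θ) sin θ cos θ + 2 sin²θ)` of
equation (1.11)/(4.6). -/
noncomputable def ghat (θ : ℝ) : ℝ :=
  4 / (3 * π) * (θ * (π - θ) + (π / 2 - θ) * sin θ * cos θ + 2 * sin θ ^ 2)

/-! ### Auxiliary definitions and lemmas -/

/-- First derivative of `ghat`. -/
noncomputable def ghatD (θ : ℝ) : ℝ :=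
  4 / (3 * π) * ((π - 2 * θ) + 3 * sin θ * cos θ + (π / 2 - θ) * (cos θ ^ 2 - sin θ ^ 2))

/-- Second derivative of `ghat`. -/
noncomputable def ghatDD (θ : ℝ) : ℝ :=
  4 / (3 * π) * (-2 + 2 * (cos θ ^ 2 - sin θ ^ 2) - 4 * (π / 2 - θ) * sin θ * cos θ)

/-- Smooth formula for the argument on the upper half-plane. -/
noncomputable def th (x y : ℝ) : ℝ := π / 2 - arctan (x / y)

lemma arg_im_pos {z : ℂ} (hz : 0 < z.im) :
    Complex.arg z = π / 2 - arctan (z.re / z.im) := by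
  have hz0 : z ≠ 0 := fun h => by simp [h] at hz
  have habs : 0 < ‖z‖ := norm_pos_iff.mpr hz0
  set t : ℝ := z.re / z.im with ht
  have hkey : Real.sqrt (1 + t ^ 2) = ‖z‖ / z.im := by
    rw [eq_div_iff hz.ne']
    have h1 : ‖z‖ = Real.sqrt (z.re ^ 2 + z.im ^ 2) := by
      rw [Complex.norm_def, Complex.normSq_apply]; ring_nf
    rw [h1, ← Real.sqrt_sq hz.le, ← Real.sqrt_mul (by positivity)]
    congr 1
    field_simp [ht]
    rw [ht, Real.sq_sqrt (sq_nonneg _)]; field_simp; ring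
  have hcos : Real.cos (π / 2 - arctan t) = z.re / ‖z‖ := by
    rw [Real.cos_pi_div_two_sub, Real.sin_arctan, hkey]
    field_simp [ht]; rw [ht, div_mul_cancel₀ _ hz.ne']
  apply Real.injOn_cos ?_ ?_ ((Complex.cos_arg hz0).trans hcos.symm)
  · exact ⟨Complex.arg_nonneg_iff.mpr hz.le, Complex.arg_le_pi z⟩
  · constructor
    · have := arctan_lt_pi_div_two t; linarith
    · have := neg_pi_div_two_lt_arctan t; linarith

lemma hasDerivAt_ghat (θ : ℝ) : HasDerivAt ghat (ghatD θ) θ := by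
  have hs := Real.hasDerivAt_sin θ
  have hc := Real.hasDerivAt_cos θ
  have h1 := (hasDerivAt_id θ).mul ((hasDerivAt_const θ π).sub (hasDerivAt_id θ))
  have h2 := (((hasDerivAt_const θ (π / 2)).sub (hasDerivAt_id θ)).mul hs).mul hc
  have h3 := (hs.pow 2).const_mul 2
  have h := ((h1.add h2).add h3).const_mul (4 / (3 * π))
  refine h.congr_deriv ?_; simp only [id_eq, Pi.sub_apply, Pi.mul_apply, Pi.pow_apply]; unfold ghatD; push_cast; ring

lemma hasDerivAt_ghatD (θ : ℝ) : HasDerivAt ghatD (ghatDD θ) θ := by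
  have hs := Real.hasDerivAt_sin θ
  have hc := Real.hasDerivAt_cos θ
  have h1 := (hasDerivAt_const θ π).sub ((hasDerivAt_id θ).const_mul 2)
  have h2 := (hs.const_mul 3).mul hc
  have h3 := ((hasDerivAt_const θ (π / 2)).sub (hasDerivAt_id θ)).mul ((hc.pow 2).sub (hs.pow 2))
  have h := ((h1.add h2).add h3).const_mul (4 / (3 * π))
  refine h.congr_deriv ?_; simp only [id_eq, Pi.sub_apply, Pi.mul_apply, Pi.pow_apply]; unfold ghatDD; push_cast; ring

lemma xy_pos {y : ℝ} (x : ℝ) (hy : 0 < y) : 0 < x ^ 2 + y ^ 2 := by positivity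

lemma hasDerivAt_th_x {y : ℝ} (hy : 0 < y) (x : ℝ) :
    HasDerivAt (fun x => th x y) (-(y / (x ^ 2 + y ^ 2))) x := by
  have h := ((Real.hasDerivAt_arctan (x / y)).comp x
    ((hasDerivAt_id x).div_const y)).const_sub (π / 2)
  refine h.congr_deriv ?_
  have h1 : (0 : ℝ) < 1 + (x / y) ^ 2 := by positivity
  have h2 := xy_pos x hy
  field_simp [id_eq]; ring

lemma hasDerivAt_th_y {y : ℝ} (hy : 0 < y) (x : ℝ) :
    HasDerivAt (fun y => th x y) (x / (x ^ 2 + y ^ 2)) y := by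
  have h := ((Real.hasDerivAt_arctan (x / y)).comp y
    ((hasDerivAt_const y x).div (hasDerivAt_id y) hy.ne')).const_sub (π / 2)
  refine h.congr_deriv ?_
  have h1 : (0 : ℝ) < 1 + (x / y) ^ 2 := by positivity
  have h2 := xy_pos x hy
  field_simp [id_eq]; ring

lemma hasDerivAt_ux {y : ℝ} (hy : 0 < y) (x : ℝ) :
    HasDerivAt (fun x => ghat (th x y)) (ghatD (th x y) * (-(y / (x ^ 2 + y ^ 2)))) x := by
  have := (hasDerivAt_ghat (th x y)).comp x (hasDerivAt_th_x hy x); exact this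

lemma hasDerivAt_uy {y : ℝ} (hy : 0 < y) (x : ℝ) :
    HasDerivAt (fun y => ghat (th x y)) (ghatD (th x y) * (x / (x ^ 2 + y ^ 2))) y :=
  (hasDerivAt_ghat (th x y)).comp y (hasDerivAt_th_y hy x)

lemma hasDerivAt_uxx {y : ℝ} (hy : 0 < y) (x : ℝ) :
    HasDerivAt (fun x => ghatD (th x y) * (-(y / (x ^ 2 + y ^ 2))))
      (ghatDD (th x y) * (y / (x ^ 2 + y ^ 2)) ^ 2 +
        ghatD (th x y) * (2 * x * y / (x ^ 2 + y ^ 2) ^ 2)) x := by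
  have p1 := (hasDerivAt_ghatD (th x y)).comp x (hasDerivAt_th_x hy x)
  have hne := (xy_pos x hy).ne'
  have p2 : HasDerivAt (fun x : ℝ => -(y / (x ^ 2 + y ^ 2)))
      (2 * x * y / (x ^ 2 + y ^ 2) ^ 2) x := by
    have h := ((hasDerivAt_const x y).div ((hasDerivAt_pow 2 x).add_const (y ^ 2)) hne).neg
    refine h.congr_deriv ?_
    field_simp; ring
  refine (p1.mul p2).congr_deriv ?_
  simp only [Function.comp_apply]; field_simp

lemma hasDerivAt_uyy {y : ℝ} (hy : 0 < y) (x : ℝ) :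
    HasDerivAt (fun y => ghatD (th x y) * (x / (x ^ 2 + y ^ 2)))
      (ghatDD (th x y) * (x / (x ^ 2 + y ^ 2)) ^ 2 +
        ghatD (th x y) * (-(2 * x * y / (x ^ 2 + y ^ 2) ^ 2))) y := by
  have p1 := (hasDerivAt_ghatD (th x y)).comp y (hasDerivAt_th_y hy x)
  have hne := (xy_pos x hy).ne'
  have p2 : HasDerivAt (fun y : ℝ => x / (x ^ 2 + y ^ 2))
      (-(2 * x * y / (x ^ 2 + y ^ 2) ^ 2)) y := by
    have h := (hasDerivAt_const y x).div ((hasDerivAt_pow 2 y).const_add (x ^ 2)) hne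
    refine h.congr_deriv ?_
    field_simp; ring
  refine (p1.mul p2).congr_deriv ?_
  simp only [Function.comp_apply]; field_simp

/-- The PDE statement of Lemma 4.6: `u(z) = ĝ(arg z)` is twice continuously differentiable
on the upper half-plane and satisfies the Poisson equation `Δu = −(4/3) q` there. -/
theorem ghat_arg_solves_poisson :
    ContDiffOn ℝ 2 (fun z : ℂ => ghat (Complex.arg z)) {z : ℂ | 0 < z.im} ∧
    ∀ z ∈ {z : ℂ | 0 < z.im},
      planeLaplacian (fun z : ℂ => ghat (Complex.arg z)) z = -(4 / 3) * qDensity z := by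
  constructor
  · -- smoothness
    have h1 : ContDiffOn ℝ 2 (fun z : ℂ => z.re / z.im) {z : ℂ | 0 < z.im} :=
      ContDiffOn.div (Complex.reCLM.contDiff.contDiffOn) (Complex.imCLM.contDiff.contDiffOn)
        (fun z hz => ne_of_gt hz)
    have h2 : ContDiffOn ℝ 2 (fun z : ℂ => th z.re z.im) {z : ℂ | 0 < z.im} :=
      contDiffOn_const.sub (Real.contDiff_arctan.comp_contDiffOn h1)
    have h3 : ContDiff ℝ 2 ghat := by
      unfold ghat
      exact contDiff_const.mul
        (((contDiff_id.mul (contDiff_const.sub contDiff_id)).add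
          (((contDiff_const.sub contDiff_id).mul Real.contDiff_sin).mul Real.contDiff_cos)).add
          (contDiff_const.mul (Real.contDiff_sin.pow 2)))
    refine (h3.comp_contDiffOn h2).congr ?_
    intro z hz
    rw [arg_im_pos hz]
    rfl
  · -- the PDE
    intro z hz
    have hz : 0 < z.im := hz
    have hz0 : z ≠ 0 := fun h => by simp [h] at hz
    have hr : 0 < ‖z‖ := norm_pos_iff.mpr hz0
    simp only [planeLaplacian]
    -- horizontal slice
    have e1 : (fun t : ℝ => ghat (Complex.arg ((t : ℂ) + (z.im : ℂ) * Complex.I))) =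
        fun t => ghat (th t z.im) := by
      funext t
      have h1 : ((t : ℂ) + (z.im : ℂ) * Complex.I).re = t := by simp
      have h2 : ((t : ℂ) + (z.im : ℂ) * Complex.I).im = z.im := by simp
      rw [arg_im_pos (by rw [h2]; exact hz), h1, h2]
      rfl
    rw [e1]
    have d1 : deriv (fun t : ℝ => ghat (th t z.im)) =
        fun t => ghatD (th t z.im) * (-(z.im / (t ^ 2 + z.im ^ 2))) :=
      funext fun t => (hasDerivAt_ux hz t).deriv
    rw [d1, (hasDerivAt_uxx hz z.re).deriv]
    -- vertical slice
    have e2 : (fun s : ℝ => ghat (Complex.arg ((z.re : ℂ) + (s : ℂ) * Complex.I))) =ᶠ[nhds z.im]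
        fun s => ghat (th z.re s) := by
      filter_upwards [eventually_gt_nhds hz] with s hs
      have h1 : ((z.re : ℂ) + (s : ℂ) * Complex.I).re = z.re := by simp
      have h2 : ((z.re : ℂ) + (s : ℂ) * Complex.I).im = s := by simp
      rw [arg_im_pos (by rw [h2]; exact hs), h1, h2]
      rfl
    have d2 : deriv (fun s : ℝ => ghat (th z.re s)) =ᶠ[nhds z.im]
        fun s => ghatD (th z.re s) * (z.re / (z.re ^ 2 + s ^ 2)) := by
      filter_upwards [eventually_gt_nhds hz] with s hs
      exact (hasDerivAt_uy hs z.re).deriv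
    rw [(e2.deriv.trans d2).deriv_eq, (hasDerivAt_uyy hz z.re).deriv]
    -- algebra
    rw [show th z.re z.im = Complex.arg z from (arg_im_pos hz).symm]
    have hne : z.re ^ 2 + z.im ^ 2 ≠ 0 := (xy_pos z.re hz).ne'
    have key : -(4 / 3) * qDensity z =
        ghatDD (Complex.arg z) / (z.re ^ 2 + z.im ^ 2) := by
      have hr2 : z.re ^ 2 + z.im ^ 2 = ‖z‖ ^ 2 := by
        rw [Complex.sq_norm, Complex.normSq_apply]; ring
      have hx : z.re = ‖z‖ * Real.cos (Complex.arg z) := by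
        rw [Complex.cos_arg hz0]; field_simp
      have hy' : z.im = ‖z‖ * Real.sin (Complex.arg z) := by
        rw [Complex.sin_arg]; field_simp
      have hgdd : ghatDD (Complex.arg z) = 4 / (3 * π) *
          (-4 * Real.sin (Complex.arg z) ^ 2 -
            4 * (π / 2 - Complex.arg z) * Real.sin (Complex.arg z) * Real.cos (Complex.arg z)) := by
        unfold ghatDD
        linear_combination (8 / (3 * π)) * (Real.sin_sq_add_cos_sq (Complex.arg z))
      unfold qDensity
      rw [hr2, hgdd, hx, hy']
      have h4 : ‖z‖ ≠ 0 := hr.ne'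
      set R := ‖z‖
      set θ := Complex.arg z
      field_simp
      ring
    rw [key]
    field_simp
    ring
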